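/- For the one-way random effects decomposition, if the within-group sample sizes are n_1,...,n_a with Σ n_i = n and all n_i equal (balanced design), then the matrix G = K^T Z Z^T K has exactly two distinct eigenvalues, whereas for an unbalanced design with distinct group sizes the number of distinct eigenvalues L can exceed 2; specifically, the nonzero eigenvalues of Z^T (I - X(X^TX)^{-1}X^T) Z determine L. -/

import Mathlib

open Matrix

section OneWayHelpers

/-- Membership in the spectrum of a real matrix is equivalent to the existence of a
nonzero eigenvector. -/
lemma Matrix.mem_spectrum_iff_exists_eigenvector {p : Type*} [Fintype p] [DecidableEq p]
    (A : Matrix p p ℝ) (μ : ℝ) :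
    μ ∈ spectrum ℝ A ↔ ∃ v, v ≠ 0 ∧ A.mulVec v = μ • v := by
  rw [spectrum.mem_iff, Matrix.isUnit_iff_isUnit_det, isUnit_iff_ne_zero, not_not,
      ← Matrix.exists_mulVec_eq_zero_iff]
  have key : ∀ v, (algebraMap ℝ (Matrix p p ℝ) μ - A).mulVec v = μ • v - A.mulVec v := by
    intro v
    rw [Matrix.sub_mulVec]
    congr 1
    ext i
    simp [Matrix.algebraMap_eq_diagonal, Matrix.mulVec_diagonal]
  constructor <;> rintro ⟨v, hv, h⟩ <;> refine ⟨v, hv, ?_⟩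
  · rw [key] at h; exact (sub_eq_zero.mp h).symm
  · rw [key, h, sub_self]

/-- A nonzero element of the spectrum of `M * N` belongs to the spectrum of `N * M`. -/
lemma Matrix.spec_swap {p q : Type*} [Fintype p] [DecidableEq p] [Fintype q] [DecidableEq q]
    (M : Matrix p q ℝ) (N : Matrix q p ℝ) (μ : ℝ) (hμ : μ ≠ 0)
    (h : μ ∈ spectrum ℝ (M * N)) : μ ∈ spectrum ℝ (N * M) := by
  rw [Matrix.mem_spectrum_iff_exists_eigenvector] at h ⊢
  obtain ⟨v, hv, h⟩ := h
  refine ⟨N.mulVec v, ?_, ?_⟩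
  · intro h0
    apply hv
    have : (M * N).mulVec v = 0 := by rw [← Matrix.mulVec_mulVec, h0, Matrix.mulVec_zero]
    rw [h] at this
    have := smul_eq_zero.mp this
    tauto
  · rw [Matrix.mulVec_mulVec, Matrix.mul_assoc, ← Matrix.mulVec_mulVec, h, Matrix.mulVec_smul]

/-- The nonzero spectra of `M * N` and `N * M` coincide. -/
lemma Matrix.spec_swap_eq {p q : Type*} [Fintype p] [DecidableEq p] [Fintype q] [DecidableEq q]
    (M : Matrix p q ℝ) (N : Matrix q p ℝ) :
    spectrum ℝ (M * N) \ {0} = spectrum ℝ (N * M) \ {0} := by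
  ext μ
  simp only [Set.mem_diff, Set.mem_singleton_iff]
  exact ⟨fun ⟨h, h0⟩ => ⟨Matrix.spec_swap M N μ h0 h, h0⟩,
    fun ⟨h, h0⟩ => ⟨Matrix.spec_swap N M μ h0 h, h0⟩⟩

/-- A matrix with fewer rows than columns has a nonzero kernel vector. -/
lemma Matrix.exists_ne_zero_mulVec_eq_zero {p q : Type*} [Fintype p] [DecidableEq p] [Fintype q]
    [DecidableEq q] (M : Matrix q p ℝ) (h : Fintype.card q < Fintype.card p) :
    ∃ v, v ≠ 0 ∧ M.mulVec v = 0 := by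
  have h1 : LinearMap.ker M.mulVecLin ≠ ⊥ := by
    intro hbot
    have hinj : Function.Injective M.mulVecLin := LinearMap.ker_eq_bot.mp hbot
    have := LinearMap.finrank_le_finrank_of_injective hinj
    simp [Module.finrank_pi] at this
    omega
  obtain ⟨v, hv, hv0⟩ := Submodule.exists_mem_ne_zero_of_ne_bot h1
  exact ⟨v, hv0, hv⟩

end OneWayHelpers

set_option maxHeartbeats 2000000 in
/-- In the one-way random effects model (X = 1ₙ, A = I, Z the group-indicator matrix,
K K ᵀ = I − (1/n)Jₙ, KᵀK = I): (i) for a balanced design (all group sizes equal, each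
at least 2, with at least two groups) the matrix G = Kᵀ Z Zᵀ K has exactly two distinct
eigenvalues; (ii) for unbalanced designs the number L of distinct eigenvalues can
exceed 2; (iii) in general the nonzero eigenvalues of G coincide with the nonzero
eigenvalues of Zᵀ (I − X(XᵀX)⁻¹Xᵀ) Z, which therefore determine L. -/
theorem one_way_eigenvalue_structure :
    -- (i) balanced case: exactly two distinct eigenvalues
    (∀ (n a : ℕ) (_ : 2 ≤ a) (grp : Fin n → Fin a)
       (m : ℕ) (_ : 2 ≤ m)
       (_ : ∀ j : Fin a, (Finset.univ.filter fun i => grp i = j).card = m)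
       (K : Matrix (Fin n) (Fin (n - 1)) ℝ)
       (_ : Kᵀ * K = 1)
       (_ : K * Kᵀ = 1 - ((n : ℝ))⁻¹ • (Matrix.of fun _ _ => (1:ℝ))),
       (spectrum ℝ
         (Kᵀ * (Matrix.of fun i j => if grp i = j then (1:ℝ) else 0)
            * (Matrix.of fun i j => if grp i = j then (1:ℝ) else 0)ᵀ * K)).ncard = 2) ∧
    -- (ii) an unbalanced design can have more than two distinct eigenvalues
    (∃ (n a : ℕ) (grp : Fin n → Fin a) (K : Matrix (Fin n) (Fin (n - 1)) ℝ),
       Kᵀ * K = 1 ∧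
       K * Kᵀ = 1 - ((n : ℝ))⁻¹ • (Matrix.of fun _ _ => (1:ℝ)) ∧
       2 < (spectrum ℝ
         (Kᵀ * (Matrix.of fun i j => if grp i = j then (1:ℝ) else 0)
            * (Matrix.of fun i j => if grp i = j then (1:ℝ) else 0)ᵀ * K)).ncard) ∧
    -- (iii) the nonzero eigenvalues of G are those of Zᵀ(I − X(XᵀX)⁻¹Xᵀ)Z
    (∀ (n a : ℕ) (grp : Fin n → Fin a)
       (K : Matrix (Fin n) (Fin (n - 1)) ℝ)
       (_ : Kᵀ * K = 1)
       (_ : K * Kᵀ = 1 - ((n : ℝ))⁻¹ • (Matrix.of fun _ _ => (1:ℝ))),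
       ∀ X : Matrix (Fin n) (Fin 1) ℝ, X = Matrix.of (fun _ _ => (1:ℝ)) →
       spectrum ℝ
           (Kᵀ * (Matrix.of fun i j => if grp i = j then (1:ℝ) else 0)
              * (Matrix.of fun i j => if grp i = j then (1:ℝ) else 0)ᵀ * K) \ {0}
         = spectrum ℝ
             ((Matrix.of fun i j => if grp i = j then (1:ℝ) else 0)ᵀ
                * (1 - X * (Xᵀ * X)⁻¹ * Xᵀ)
                * (Matrix.of fun i j => if grp i = j then (1:ℝ) else 0)) \ {0}) := by
  refine ⟨?_, ?_, ?_⟩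
  · -- Part (i): balanced design
    intro n a ha grp m hm hc K hK1 hK2
    classical
    set Z : Matrix (Fin n) (Fin a) ℝ := Matrix.of fun i j => if grp i = j then 1 else 0
      with hZdef
    set J : Matrix (Fin n) (Fin n) ℝ := Matrix.of fun _ _ => 1 with hJdef
    set G : Matrix (Fin (n-1)) (Fin (n-1)) ℝ := Kᵀ * Z * Zᵀ * K with hGdef
    have hn : n = a * m := by
      have h1 : (Finset.univ : Finset (Fin n)).card
          = ∑ j : Fin a, (Finset.univ.filter fun i => grp i = j).card :=
        Finset.card_eq_sum_card_fiberwise (fun x _ => Finset.mem_univ _)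
      simpa [hc, Finset.card_univ, mul_comm] using h1
    have hn0 : (n : ℝ) ≠ 0 := by
      have : 0 < n := by nlinarith
      positivity
    have hZtZ : Zᵀ * Z = (m : ℝ) • (1 : Matrix (Fin a) (Fin a) ℝ) := by
      ext j j'
      simp only [Matrix.mul_apply, Matrix.transpose_apply, Matrix.smul_apply, Matrix.one_apply,
        hZdef, Matrix.of_apply, smul_eq_mul]
      rcases eq_or_ne j j' with rfl | hne
      · rw [if_pos rfl, mul_one]
        have : ∀ i : Fin n, (if grp i = j then (1:ℝ) else 0) * (if grp i = j then 1 else 0)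
            = if grp i = j then 1 else 0 := by intro i; split_ifs <;> norm_num
        rw [Finset.sum_congr rfl fun i _ => this i, Finset.sum_boole, hc j]
      · rw [if_neg hne, mul_zero]
        refine Finset.sum_eq_zero fun i _ => ?_
        split_ifs with h1 h2
        · exact absurd (h1.symm.trans h2) hne
        all_goals norm_num
    have hZtJ : Zᵀ * J = (m : ℝ) • (Matrix.of fun _ _ => (1:ℝ) : Matrix (Fin a) (Fin n) ℝ) := by
      ext j i'
      simp only [Matrix.mul_apply, Matrix.transpose_apply, Matrix.smul_apply, hZdef, hJdef,
        Matrix.of_apply, smul_eq_mul, mul_one]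
      rw [Finset.sum_boole, hc j]
    have hZO : Z * (Matrix.of fun _ _ => (1:ℝ) : Matrix (Fin a) (Fin n) ℝ) = J := by
      ext i i'
      simp only [Matrix.mul_apply, hZdef, hJdef, Matrix.of_apply, mul_one]
      rw [Finset.sum_ite_eq]
      simp
    set W : Matrix (Fin n) (Fin n) ℝ := Z * Zᵀ with hWdef
    have hWJ : W * J = (m : ℝ) • J := by
      rw [hWdef, Matrix.mul_assoc, hZtJ, Matrix.mul_smul, hZO]
    have hWsymm : Wᵀ = W := by rw [hWdef, Matrix.transpose_mul, Matrix.transpose_transpose]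
    have hJsymm : Jᵀ = J := by ext i j; rw [hJdef]; rfl
    have hJW : J * W = (m : ℝ) • J := by
      have := congrArg Matrix.transpose hWJ
      rwa [Matrix.transpose_mul, Matrix.transpose_smul, hWsymm, hJsymm] at this
    have hWW : W * W = (m : ℝ) • W := by
      rw [hWdef, Matrix.mul_assoc, ← Matrix.mul_assoc Zᵀ Z Zᵀ, hZtZ, Matrix.smul_mul,
        Matrix.one_mul, Matrix.mul_smul]
    have hWZ : W * Z = (m : ℝ) • Z := by
      rw [hWdef, Matrix.mul_assoc, hZtZ, Matrix.mul_smul, Matrix.mul_one]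
    have hKtJ : Kᵀ * J = 0 := by
      have e : (Kᵀ * K) * Kᵀ = Kᵀ * (K * Kᵀ) := Matrix.mul_assoc _ _ _
      rw [hK1, hK2, Matrix.one_mul, Matrix.mul_sub, Matrix.mul_one, Matrix.mul_smul] at e
      have : ((n:ℝ))⁻¹ • (Kᵀ * J) = 0 := sub_eq_self.mp e.symm
      rcases smul_eq_zero.mp this with h | h
      · exact absurd h (inv_ne_zero hn0)
      · exact h
    have hJK : J * K = 0 := by
      have := congrArg Matrix.transpose hKtJ
      rwa [Matrix.transpose_mul, hJsymm, Matrix.transpose_transpose, Matrix.transpose_zero]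
        at this
    have hGW : G = Kᵀ * W * K := by rw [hGdef, hWdef, Matrix.mul_assoc Kᵀ Z Zᵀ]
    have h2 : (1 - ((n:ℝ))⁻¹ • J) * (W * K) = W * K := by
      rw [Matrix.sub_mul, Matrix.one_mul, Matrix.smul_mul, ← Matrix.mul_assoc, hJW,
        Matrix.smul_mul, hJK, smul_zero, smul_zero, sub_zero]
    have hGG : G * G = (m : ℝ) • G := by
      have h1 : G * G = Kᵀ * (W * ((K * Kᵀ) * (W * K))) := by
        rw [hGW]; simp only [Matrix.mul_assoc]
      rw [h1, hK2, h2, ← Matrix.mul_assoc W W K, hWW, Matrix.smul_mul, Matrix.mul_smul]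
      congr 1
      rw [hGW]
      simp only [Matrix.mul_assoc]
    have hsub : spectrum ℝ G ⊆ {0, (m:ℝ)} := by
      intro μ hμ
      rw [Matrix.mem_spectrum_iff_exists_eigenvector] at hμ
      obtain ⟨v, hv, hGv⟩ := hμ
      have h3 : (G * G).mulVec v = (μ * μ) • v := by
        rw [← Matrix.mulVec_mulVec, hGv, Matrix.mulVec_smul, hGv, smul_smul]
      rw [hGG, Matrix.smul_mulVec, hGv, smul_smul] at h3
      have h5 : ((m:ℝ) * μ - μ * μ) • v = 0 := by
        rw [sub_smul, h3, sub_self]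
      have h6 := (smul_eq_zero.mp h5).resolve_right hv
      have h7 : μ * ((m:ℝ) - μ) = 0 := by ring_nf; ring_nf at h6; linarith
      rcases mul_eq_zero.mp h7 with h | h
      · exact Or.inl h
      · right
        have : μ = (m:ℝ) := by linarith
        simp [this]
    have hj01 : (⟨0, by omega⟩ : Fin a) ≠ ⟨1, by omega⟩ := by simp [Fin.ext_iff]
    set j0 : Fin a := ⟨0, by omega⟩
    set j1 : Fin a := ⟨1, by omega⟩
    set w : Fin a → ℝ := fun j => if j = j0 then 1 else if j = j1 then -1 else 0 with hwdef
    have hsw : ∑ j, w j = 0 := by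
      have : ∀ j, w j = (if j = j0 then (1:ℝ) else 0) + (if j = j1 then (-1) else 0) := by
        intro j
        rw [hwdef]
        by_cases h0 : j = j0 <;> by_cases h1 : j = j1 <;> simp_all [hj01]
      rw [Finset.sum_congr rfl fun j _ => this j, Finset.sum_add_distrib]
      simp
    set u : Fin n → ℝ := Z.mulVec w with hudef
    have hu : ∀ i, u i = w (grp i) := by
      intro i
      simp only [hudef, Matrix.mulVec, dotProduct, hZdef, Matrix.of_apply, ite_mul, one_mul,
        zero_mul]
      rw [Finset.sum_ite_eq]
      simp
    have hJu : J.mulVec u = 0 := by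
      ext i
      simp only [Matrix.mulVec, dotProduct, hJdef, Matrix.of_apply, one_mul, Pi.zero_apply]
      have h8 : ∑ i', u i'
          = ∑ j : Fin a, ∑ i' ∈ Finset.univ.filter (fun i' => grp i' = j), u i' :=
        (Finset.sum_fiberwise_of_maps_to (fun x _ => Finset.mem_univ _) _).symm
      rw [h8]
      have h9 : ∀ j : Fin a, ∑ i' ∈ Finset.univ.filter (fun i' => grp i' = j), u i'
          = (m:ℝ) * w j := by
        intro j
        rw [Finset.sum_congr rfl (fun i' hi' => by
          rw [hu i', (Finset.mem_filter.mp hi').2]), Finset.sum_const, hc j, nsmul_eq_mul]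
      rw [Finset.sum_congr rfl fun j _ => h9 j, ← Finset.mul_sum, hsw, mul_zero]
    have hu0 : u ≠ 0 := by
      obtain ⟨i0, hi0⟩ := Finset.card_pos.mp (by rw [hc j0]; omega :
        0 < (Finset.univ.filter fun i => grp i = j0).card)
      have hgi0 : grp i0 = j0 := (Finset.mem_filter.mp hi0).2
      intro h
      have := congrFun h i0
      rw [hu i0, hgi0, hwdef] at this
      simp at this
    set v : Fin (n-1) → ℝ := Kᵀ.mulVec u with hvdef
    have hv0 : v ≠ 0 := by
      intro h
      apply hu0
      have h1 : (K * Kᵀ).mulVec u = 0 := by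
        rw [← Matrix.mulVec_mulVec, ← hvdef, h, Matrix.mulVec_zero]
      rw [hK2, Matrix.sub_mulVec, Matrix.one_mulVec, Matrix.smul_mulVec, hJu, smul_zero,
        sub_zero] at h1
      exact h1
    have hGKt : G * Kᵀ = Kᵀ * W := by
      have h1 : G * Kᵀ = Kᵀ * (W * (K * Kᵀ)) := by rw [hGW]; simp only [Matrix.mul_assoc]
      rw [h1, hK2, Matrix.mul_sub, Matrix.mul_one, Matrix.mul_smul, hWJ, Matrix.mul_sub,
        Matrix.mul_smul, Matrix.mul_smul, hKtJ, smul_zero, smul_zero, sub_zero]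
    have hmmem : (m:ℝ) ∈ spectrum ℝ G := by
      rw [Matrix.mem_spectrum_iff_exists_eigenvector]
      refine ⟨v, hv0, ?_⟩
      rw [hvdef, Matrix.mulVec_mulVec, hGKt, hudef, Matrix.mulVec_mulVec, Matrix.mul_assoc,
        hWZ, Matrix.mul_smul, Matrix.smul_mulVec, ← Matrix.mulVec_mulVec]
    have h0mem : (0:ℝ) ∈ spectrum ℝ G := by
      rw [Matrix.mem_spectrum_iff_exists_eigenvector]
      have hcard : Fintype.card (Fin a) < Fintype.card (Fin (n-1)) := by
        simp only [Fintype.card_fin]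
        have : a * 2 ≤ a * m := Nat.mul_le_mul_left a hm
        omega
      obtain ⟨x, hx, hker⟩ := Matrix.exists_ne_zero_mulVec_eq_zero (Zᵀ * K) hcard
      refine ⟨x, hx, ?_⟩
      have hG2 : G = (Kᵀ * Z) * (Zᵀ * K) := by rw [hGdef]; simp only [Matrix.mul_assoc]
      rw [hG2, ← Matrix.mulVec_mulVec, hker, Matrix.mulVec_zero, zero_smul]
    have hspec : spectrum ℝ G = {0, (m:ℝ)} := by
      refine Set.Subset.antisymm hsub ?_
      intro μ hμ
      rcases hμ with rfl | hμ
      · exact h0mem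
      · rw [Set.mem_singleton_iff] at hμ; subst hμ; exact hmmem
    rw [hspec, Set.ncard_pair]
    have : (2:ℝ) ≤ (m:ℝ) := by exact_mod_cast hm
    intro h
    rw [← h] at this
    linarith
  · -- Part (ii): unbalanced example with three distinct eigenvalues
    set K4 : Matrix (Fin 4) (Fin 3) ℝ :=
      !![1/2, 1/2, 1/2; -1/2, 1/2, -1/2; 1/2, -1/2, -1/2; -1/2, -1/2, 1/2] with hK4
    set g4 : Fin 4 → Fin 3 := ![0, 1, 2, 2] with hg4
    refine ⟨4, 3, g4, K4, ?_, ?_, ?_⟩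
    · ext i j
      fin_cases i <;> fin_cases j <;>
        norm_num [hK4, Matrix.mul_apply, Matrix.transpose_apply, Fin.sum_univ_succ,
          Matrix.vecHead, Matrix.vecTail, Matrix.one_apply, Fin.ext_iff, Function.comp]
    · ext i j
      fin_cases i <;> fin_cases j <;>
        norm_num [hK4, Matrix.mul_apply, Matrix.transpose_apply, Fin.sum_univ_succ,
          Matrix.vecHead, Matrix.vecTail, Matrix.one_apply, Fin.ext_iff, Function.comp]
    · have hG : K4ᵀ * (Matrix.of fun i j => if g4 i = j then (1:ℝ) else 0)
          * (Matrix.of fun i j => if g4 i = j then (1:ℝ) else 0)ᵀ * K4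
          = !![1/2, 0, 1/2; 0, 3/2, 0; 1/2, 0, 1/2] := by
        ext i j
        fin_cases i <;> fin_cases j <;>
          norm_num +decide [hK4, hg4, Matrix.mul_apply, Matrix.transpose_apply, Fin.sum_univ_succ,
            Matrix.vecHead, Matrix.vecTail, Function.comp]
      rw [hG]
      set G : Matrix (Fin 3) (Fin 3) ℝ := !![1/2, 0, 1/2; 0, 3/2, 0; 1/2, 0, 1/2] with hGd
      have h0 : (0:ℝ) ∈ spectrum ℝ G := by
        rw [Matrix.mem_spectrum_iff_exists_eigenvector]
        refine ⟨![1, 0, -1], by intro h; have := congrFun h 0; norm_num at this, ?_⟩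
        ext i
        fin_cases i <;>
          norm_num [hGd, Matrix.mulVec, dotProduct, Fin.sum_univ_succ, Matrix.vecHead,
            Matrix.vecTail, Function.comp]
      have h1 : (1:ℝ) ∈ spectrum ℝ G := by
        rw [Matrix.mem_spectrum_iff_exists_eigenvector]
        refine ⟨![1, 0, 1], by intro h; have := congrFun h 0; norm_num at this, ?_⟩
        ext i
        fin_cases i <;>
          norm_num [hGd, Matrix.mulVec, dotProduct, Fin.sum_univ_succ, Matrix.vecHead,
            Matrix.vecTail, Function.comp]
      have h32 : (3/2:ℝ) ∈ spectrum ℝ G := by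
        rw [Matrix.mem_spectrum_iff_exists_eigenvector]
        refine ⟨![0, 1, 0], by intro h; have := congrFun h 1; norm_num at this, ?_⟩
        ext i
        fin_cases i <;>
          norm_num [hGd, Matrix.mulVec, dotProduct, Fin.sum_univ_succ, Matrix.vecHead,
            Matrix.vecTail, Function.comp]
      have hsub : {(0:ℝ), 1, 3/2} ⊆ spectrum ℝ G := by
        intro μ hμ
        rcases hμ with rfl | rfl | hμ
        · exact h0
        · exact h1
        · rw [Set.mem_singleton_iff] at hμ; subst hμ; exact h32
      have h3 : ({(0:ℝ), 1, 3/2} : Set ℝ).ncard = 3 := by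
        rw [Set.ncard_insert_of_notMem (by norm_num) (by simp), Set.ncard_pair (by norm_num)]
      calc 2 < 3 := by norm_num
        _ = ({(0:ℝ), 1, 3/2} : Set ℝ).ncard := h3.symm
        _ ≤ _ := Set.ncard_le_ncard hsub (Matrix.finite_spectrum G)
  · -- Part (iii): nonzero spectra coincide
    intro n a grp K hK1 hK2 X hX
    set Z : Matrix (Fin n) (Fin a) ℝ := Matrix.of fun i j => if grp i = j then 1 else 0
      with hZ
    have hP : 1 - X * (Xᵀ * X)⁻¹ * Xᵀ = K * Kᵀ := by
      rw [hK2]; subst hX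
      congr 1
      have hdet : ((Matrix.of fun _ _ => (1:ℝ) : Matrix (Fin n) (Fin 1) ℝ)ᵀ *
          (Matrix.of fun _ _ => (1:ℝ) : Matrix (Fin n) (Fin 1) ℝ)).det = (n : ℝ) := by
        rw [Matrix.det_fin_one]
        simp [Matrix.mul_apply]
      rw [Matrix.inv_def, hdet, Matrix.adjugate_fin_one, Ring.inverse_eq_inv']
      ext i j
      simp [Matrix.mul_apply, Finset.mul_sum, Finset.sum_mul]
    rw [hP]
    have h1 : Kᵀ * Z * Zᵀ * K = (Kᵀ * Z) * (Zᵀ * K) := by rw [Matrix.mul_assoc]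
    have h2 : Zᵀ * (K * Kᵀ) * Z = (Zᵀ * K) * (Kᵀ * Z) := by
      rw [Matrix.mul_assoc, Matrix.mul_assoc, Matrix.mul_assoc]
    rw [h1, h2]
    exact Matrix.spec_swap_eq _ _
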